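/- Let f : ℝⁿ → ℝ be a homogeneous polynomial of degree d ≥ 1 and v ∈ ℝⁿ with v ∈ K°(f,v). Then for every x ∈ K°(f,v) there exists a continuous path γ : [0,1] → ℝⁿ with γ(0) = x, γ(1) = v, and f(γ(t)) > 0 for all t ∈ [0,1]. In particular, K°(f,v) is contained in the connected component of {y ∈ ℝⁿ : f(y) ≠ 0} that contains v. -/

import Mathlib

open Set Polynomial

/-- Directional derivative `D_v f (x) = ⟨∇f(x), v⟩ = fderiv ℝ f x v`. -/
noncomputable def dirDeriv {n : ℕ} (v : Fin n → ℝ) (f : (Fin n → ℝ) → ℝ) :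
    (Fin n → ℝ) → ℝ := fun x => fderiv ℝ f x v

/-- The open cone `K°(f,v) = {x : f(x) > 0, D_v f(x) > 0, …, D_v^{d-1} f(x) > 0}`. -/
def Kcirc {n : ℕ} (d : ℕ) (f : (Fin n → ℝ) → ℝ) (v : Fin n → ℝ) : Set (Fin n → ℝ) :=
  {x | ∀ k < d, 0 < (dirDeriv v)^[k] f x}

noncomputable section StmtAux

variable {n : ℕ}

/-- Directional derivative operator on multivariate polynomials. -/
def Dop (v : Fin n → ℝ) (p : MvPolynomial (Fin n) ℝ) : MvPolynomial (Fin n) ℝ :=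
  ∑ i, MvPolynomial.C (v i) * MvPolynomial.pderiv i p

/-- Restriction of a multivariate polynomial to the line `t ↦ x + t v`. -/
def lineP (v x : Fin n → ℝ) (p : MvPolynomial (Fin n) ℝ) : Polynomial ℝ :=
  MvPolynomial.aeval (fun i => Polynomial.C (x i) + Polynomial.C (v i) * Polynomial.X) p

lemma lineP_eval (v x : Fin n → ℝ) (p : MvPolynomial (Fin n) ℝ) (t : ℝ) :
    (lineP v x p).eval t = MvPolynomial.eval (x + t • v) p := by
  induction p using MvPolynomial.induction_on with
  | C a => simp [lineP]
  | add p q hp hq => simp [lineP, map_add] at hp hq ⊢; rw [hp, hq]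
  | mul_X p i hp =>
      simp only [lineP, map_mul, MvPolynomial.aeval_X, MvPolynomial.eval_mul,
        MvPolynomial.eval_X, Polynomial.eval_mul, Polynomial.eval_add, Polynomial.eval_C,
        Polynomial.eval_X] at hp ⊢
      rw [hp]
      have h2 : (x + t • v) i = x i + t * v i := by simp
      rw [h2]; ring

lemma Dop_mul_X (v : Fin n → ℝ) (p : MvPolynomial (Fin n) ℝ) (i : Fin n) :
    Dop v (p * MvPolynomial.X i) = Dop v p * MvPolynomial.X i + MvPolynomial.C (v i) * p := by
  classical
  unfold Dop
  simp only [MvPolynomial.pderiv_mul, MvPolynomial.pderiv_X, mul_add, Finset.sum_add_distrib]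
  congr 1
  · rw [Finset.sum_mul]
    exact Finset.sum_congr rfl fun j _ => (mul_assoc _ _ _).symm
  · simp [Pi.single_apply, mul_ite, mul_one, mul_zero, Finset.sum_ite_eq, mul_comm]


lemma derivative_lineP (v x : Fin n → ℝ) (p : MvPolynomial (Fin n) ℝ) :
    (lineP v x p).derivative = lineP v x (Dop v p) := by
  induction p using MvPolynomial.induction_on with
  | C a => simp [lineP, Dop, MvPolynomial.pderiv_C]
  | add p q hp hq =>
      have : Dop v (p + q) = Dop v p + Dop v q := by
        simp [Dop, map_add, mul_add, Finset.sum_add_distrib]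
      simp only [lineP, map_add, derivative_add] at hp hq ⊢
      rw [hp, hq, this, map_add]
  | mul_X p i hp =>
      rw [Dop_mul_X]
      simp only [lineP, map_mul, map_add, MvPolynomial.aeval_X] at hp ⊢
      rw [derivative_mul, hp]
      simp [MvPolynomial.aeval_C, Polynomial.derivative_add, Polynomial.derivative_C,
        Polynomial.derivative_mul, Polynomial.derivative_X]
      ring

lemma iterate_derivative_lineP (v x : Fin n → ℝ) (p : MvPolynomial (Fin n) ℝ) (k : ℕ) :
    Polynomial.derivative^[k] (lineP v x p) = lineP v x ((Dop v)^[k] p) := by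
  induction k with
  | zero => rfl
  | succ k ih =>
      rw [Function.iterate_succ_apply', ih, derivative_lineP,
        (Function.iterate_succ_apply' (Dop v) k p : (Dop v)^[k + 1] p = Dop v ((Dop v)^[k] p))]

lemma diff_eval (p : MvPolynomial (Fin n) ℝ) :
    Differentiable ℝ (fun y : Fin n → ℝ => MvPolynomial.eval y p) := by
  induction p using MvPolynomial.induction_on with
  | C a => simpa using differentiable_const (a : ℝ)
  | add p q hp hq => simpa [Pi.add_def] using hp.add hq
  | mul_X p i hp =>
      have hi : Differentiable ℝ (fun y : Fin n → ℝ => y i) :=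
        (ContinuousLinearMap.proj i : ((Fin n) → ℝ) →L[ℝ] ℝ).differentiable
      simpa [Pi.mul_def] using hp.mul hi

lemma fderiv_line (v : Fin n → ℝ) (g : (Fin n → ℝ) → ℝ) (y : Fin n → ℝ)
    (hg : DifferentiableAt ℝ g y) :
    fderiv ℝ g y v = deriv (fun s : ℝ => g (y + s • v)) 0 := by
  have hline : HasDerivAt (fun s : ℝ => y + s • v) v 0 := by
    simpa using ((hasDerivAt_id (0 : ℝ)).smul_const v).const_add y
  have h0 : y + (0 : ℝ) • v = y := by simp
  have hg' : HasFDerivAt g (fderiv ℝ g y) ((fun s : ℝ => y + s • v) 0) := by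
    simpa using hg.hasFDerivAt
  have h2 : HasDerivAt (fun s : ℝ => g (y + s • v)) (fderiv ℝ g y v) 0 :=
    hg'.comp_hasDerivAt 0 hline
  exact h2.deriv.symm


lemma iter_eq (v : Fin n → ℝ) (f : (Fin n → ℝ) → ℝ) (p : MvPolynomial (Fin n) ℝ)
    (hf : ∀ x, f x = MvPolynomial.eval x p) (k : ℕ) (x : Fin n → ℝ) :
    (dirDeriv v)^[k] f x = MvPolynomial.eval x ((Dop v)^[k] p) := by
  induction k generalizing x with
  | zero => simpa using hf x
  | succ k ih =>
      have hFk : (dirDeriv v)^[k] f = fun y => MvPolynomial.eval y ((Dop v)^[k] p) :=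
        funext fun y => ih y
      rw [Function.iterate_succ_apply',
        (Function.iterate_succ_apply' (Dop v) k p : (Dop v)^[k + 1] p = Dop v ((Dop v)^[k] p))]
      show fderiv ℝ ((dirDeriv v)^[k] f) x v = _
      rw [hFk, fderiv_line v _ x ((diff_eval _).differentiableAt)]
      have h1 : (fun s : ℝ => MvPolynomial.eval (x + s • v) ((Dop v)^[k] p)) =
          fun s : ℝ => (lineP v x ((Dop v)^[k] p)).eval s :=
        funext fun s => (lineP_eval v x _ s).symm
      rw [h1, Polynomial.deriv, derivative_lineP, lineP_eval]
      simp

lemma iter_eq_coeff (v : Fin n → ℝ) (f : (Fin n → ℝ) → ℝ) (p : MvPolynomial (Fin n) ℝ)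
    (hf : ∀ x, f x = MvPolynomial.eval x p) (k : ℕ) (x : Fin n → ℝ) :
    (dirDeriv v)^[k] f x = (Nat.factorial k : ℝ) * (lineP v x p).coeff k := by
  rw [iter_eq v f p hf k x]
  have h1 : MvPolynomial.eval x ((Dop v)^[k] p) = (lineP v x ((Dop v)^[k] p)).eval 0 := by
    rw [lineP_eval]; simp
  rw [h1, ← iterate_derivative_lineP, ← Polynomial.coeff_zero_eq_eval_zero,
    Polynomial.coeff_iterate_derivative]
  simp [Nat.descFactorial_self, nsmul_eq_mul]

lemma coeff_comp_C_mul_X (q : Polynomial ℝ) (c : ℝ) (k : ℕ) :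
    (q.comp (Polynomial.C c * Polynomial.X)).coeff k = c ^ k * q.coeff k := by
  induction q using Polynomial.induction_on' with
  | add p q hp hq => simp [Polynomial.add_comp, hp, hq, mul_add]
  | monomial m a =>
      rw [Polynomial.monomial_comp, mul_pow, ← Polynomial.C_pow]
      rw [show Polynomial.C a * (Polynomial.C (c ^ m) * Polynomial.X ^ m) =
        Polynomial.C (a * c ^ m) * Polynomial.X ^ m by rw [map_mul]; ring]
      simp only [Polynomial.coeff_C_mul, Polynomial.coeff_X_pow, Polynomial.coeff_monomial]
      rcases eq_or_ne k m with h | h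
      · subst h; simp [mul_comm]
      · simp [h, Ne.symm h]

end StmtAux

theorem stmt3 (n d : ℕ) (hd : 1 ≤ d) (f : (Fin n → ℝ) → ℝ)
    (hpoly : ∃ p : MvPolynomial (Fin n) ℝ, ∀ x, f x = MvPolynomial.eval x p)
    (hhom : ∀ c : ℝ, 0 < c → ∀ x, f (c • x) = c ^ d * f x)
    (v : Fin n → ℝ) (hv : v ∈ Kcirc d f v) :
    (∀ x ∈ Kcirc d f v, ∃ γ : ℝ → (Fin n → ℝ),
      ContinuousOn γ (Icc (0 : ℝ) 1) ∧ γ 0 = x ∧ γ 1 = v ∧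
      ∀ t ∈ Icc (0 : ℝ) 1, 0 < f (γ t)) ∧
    Kcirc d f v ⊆ connectedComponentIn {y | f y ≠ 0} v := by
  classical
  obtain ⟨p, hf⟩ := hpoly
  have hv' : ∀ k < d, 0 < (dirDeriv v)^[k] f v := hv
  have hfv : 0 < f v := by simpa using hv' 0 (by omega)
  have key : ∀ (k : ℕ) (x : Fin n → ℝ),
      (dirDeriv v)^[k] f x = (Nat.factorial k : ℝ) * (lineP v x p).coeff k :=
    fun k x => iter_eq_coeff v f p hf k x
  have hfacpos : ∀ k : ℕ, (0 : ℝ) < (Nat.factorial k : ℝ) := fun k => by positivity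
  -- scaling invariance of the `d`-th coefficient
  have hscale : ∀ c : ℝ, 0 < c → ∀ y, (lineP v (c • y) p).coeff d = (lineP v y p).coeff d := by
    intro c hc y
    have hcomp : (lineP v (c • y) p).comp (Polynomial.C c * Polynomial.X)
        = Polynomial.C (c ^ d) * lineP v y p := by
      apply Polynomial.funext
      intro t
      rw [Polynomial.eval_comp]
      simp only [Polynomial.eval_mul, Polynomial.eval_C, Polynomial.eval_X]
      rw [lineP_eval, lineP_eval, ← hf, ← hf]
      have h3 : c • y + (c * t) • v = c • (y + t • v) := by rw [smul_add, smul_smul]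
      rw [h3, hhom c hc]
    have h4 := congrArg (fun r => Polynomial.coeff r d) hcomp
    simp only [coeff_comp_C_mul_X, Polynomial.coeff_C_mul] at h4
    exact mul_left_cancel₀ (pow_ne_zero d (ne_of_gt hc)) h4
  -- the d-th coefficient is the same for all base points
  have hconst : ∀ y : Fin n → ℝ,
      (lineP v y p).coeff d = (lineP v (0 : Fin n → ℝ) p).coeff d := by
    intro y
    set pd := (Dop v)^[d] p with hpd
    have e3 : ∀ z : Fin n → ℝ,
        MvPolynomial.eval z pd = (Nat.factorial d : ℝ) * (lineP v z p).coeff d := fun z => by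
      rw [← iter_eq v f p hf d, key]
    have hzero' : ∀ c : ℝ, 0 < c →
        (lineP y (0 : Fin n → ℝ) pd - Polynomial.C (MvPolynomial.eval y pd)).IsRoot c := by
      intro c hc
      have e1 : (lineP y 0 pd).eval c = MvPolynomial.eval (c • y) pd := by
        rw [lineP_eval]; simp
      have e2 : MvPolynomial.eval (c • y) pd = MvPolynomial.eval y pd := by
        rw [e3, e3, hscale c hc]
      simp [Polynomial.IsRoot, e1, e2]
    have h5 : lineP y (0 : Fin n → ℝ) pd - Polynomial.C (MvPolynomial.eval y pd) = 0 :=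
      Polynomial.eq_zero_of_infinite_isRoot _
        ((Set.Ioi_infinite (0 : ℝ)).mono fun c hc => hzero' c hc)
    have h6 := congrArg (fun r => Polynomial.eval 0 r) h5
    simp only [Polynomial.eval_sub, Polynomial.eval_C, Polynomial.eval_zero] at h6
    rw [lineP_eval] at h6
    have h7 : MvPolynomial.eval (0 : Fin n → ℝ) pd = MvPolynomial.eval y pd := by
      have : (0 : Fin n → ℝ) + (0 : ℝ) • y = 0 := by simp
      rw [this] at h6
      linarith [h6]
    have h8 := h7
    rw [e3, e3] at h8
    exact (mul_left_cancel₀ (ne_of_gt (hfacpos d)) h8.symm)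
  -- value of the constant: f v
  have hqv : lineP v v p = Polynomial.C (f v) * (1 + Polynomial.X) ^ d := by
    have h5 : lineP v v p - Polynomial.C (f v) * (1 + Polynomial.X) ^ d = 0 := by
      apply Polynomial.eq_zero_of_infinite_isRoot
      apply (Set.Ioi_infinite (-1 : ℝ)).mono
      intro t ht
      have ht' : (0 : ℝ) < 1 + t := by have := (Set.mem_Ioi.mp ht); linarith
      have e1 : (lineP v v p).eval t = f ((1 + t) • v) := by
        rw [lineP_eval, ← hf]
        congr 1
        rw [add_smul, one_smul]
      simp only [Polynomial.IsRoot, Polynomial.eval_sub, Polynomial.eval_mul,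
        Polynomial.eval_C, Polynomial.eval_pow, Polynomial.eval_add,
        Polynomial.eval_one, Polynomial.eval_X, Set.mem_setOf_eq]
      rw [e1, hhom _ ht']
      ring
    have := sub_eq_zero.mp h5
    exact this
  have hcd : ∀ y : Fin n → ℝ, (lineP v y p).coeff d = f v := by
    intro y
    rw [hconst y, ← hconst v, hqv]
    simp [Polynomial.coeff_C_mul, Polynomial.coeff_one_add_X_pow]
  -- derivatives of order > d vanish
  have hFd : (dirDeriv v)^[d] f = fun _ => (Nat.factorial d : ℝ) * f v :=
    funext fun y => by rw [key, hcd]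
  have hhigh : ∀ j (x : Fin n → ℝ), (dirDeriv v)^[d + 1 + j] f x = 0 := by
    intro j
    induction j with
    | zero =>
        intro x
        have : d + 1 + 0 = d + 1 := rfl
        rw [this, Function.iterate_succ_apply', hFd]
        show fderiv ℝ (fun _ : Fin n → ℝ => (Nat.factorial d : ℝ) * f v) x v = 0
        simp
    | succ j ih =>
        intro x
        have h9 : d + 1 + (j + 1) = (d + 1 + j) + 1 := by omega
        rw [h9, Function.iterate_succ_apply']
        have h10 : (dirDeriv v)^[d + 1 + j] f = fun _ : Fin n → ℝ => (0 : ℝ) := funext ih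
        rw [h10]
        show fderiv ℝ (fun _ : Fin n → ℝ => (0 : ℝ)) x v = 0
        simp
  have hcoeff0 : ∀ (x : Fin n → ℝ) (k : ℕ), d < k → (lineP v x p).coeff k = 0 := by
    intro x k hk
    have h11 := hhigh (k - d - 1) x
    rw [show d + 1 + (k - d - 1) = k by omega, key] at h11
    exact (mul_eq_zero.mp h11).resolve_left (ne_of_gt (hfacpos k))
  have hdeg : ∀ x : Fin n → ℝ, (lineP v x p).natDegree ≤ d := fun x =>
    Polynomial.natDegree_le_iff_coeff_eq_zero.mpr fun N hN => hcoeff0 x N hN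
  -- positivity of coefficients on the cone
  have hcpos : ∀ x ∈ Kcirc d f v, ∀ i ≤ d, 0 < (lineP v x p).coeff i := by
    intro x hx i hi
    rcases lt_or_eq_of_le hi with h | h
    · have h12 := hx i h
      rw [key] at h12
      nlinarith [hfacpos i]
    · rw [h, hcd]; exact hfv
  -- positivity along the ray
  have hpos : ∀ x ∈ Kcirc d f v, ∀ s : ℝ, 0 ≤ s → 0 < f (x + s • v) := by
    intro x hx s hs
    rw [hf, ← lineP_eval,
      Polynomial.eval_eq_sum_range' (lt_of_le_of_lt (hdeg x) (Nat.lt_succ_self d)) s]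
    apply Finset.sum_pos'
    · intro i hi
      exact mul_nonneg (le_of_lt (hcpos x hx i (by
        have := Finset.mem_range.mp hi; omega))) (pow_nonneg hs i)
    · refine ⟨0, Finset.mem_range.mpr (by omega), ?_⟩
      simpa using hcpos x hx 0 (Nat.zero_le d)
  -- the path
  have hpath : ∀ x ∈ Kcirc d f v, ∃ γ : ℝ → (Fin n → ℝ),
      ContinuousOn γ (Icc (0 : ℝ) 1) ∧ γ 0 = x ∧ γ 1 = v ∧
      ∀ t ∈ Icc (0 : ℝ) 1, 0 < f (γ t) := by
    intro x hx
    refine ⟨fun t => (1 - t) • x + t • v, ?_, by simp, by simp, ?_⟩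
    · exact (Continuous.add ((continuous_const.sub continuous_id).smul continuous_const)
        (continuous_id.smul continuous_const)).continuousOn
    · intro t ht
      show 0 < f ((1 - t) • x + t • v)
      rcases eq_or_lt_of_le ht.2 with h1 | h1
    
      · rw [h1]; simpa using hfv
      · have hc : 0 < 1 - t := by linarith
        have hs : 0 ≤ t / (1 - t) := div_nonneg ht.1 (le_of_lt hc)
        have hγ : (1 - t) • x + t • v = (1 - t) • (x + (t / (1 - t)) • v) := by
          rw [smul_add, smul_smul, mul_comm, div_mul_cancel₀ _ (ne_of_gt hc)]
        rw [hγ, hhom _ hc]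
        exact mul_pos (pow_pos hc d) (hpos x hx _ hs)
  refine ⟨hpath, ?_⟩
  intro x hx
  obtain ⟨γ, hcont, h0, h1, hposγ⟩ := hpath x hx
  have himg : IsPreconnected (γ '' Icc (0 : ℝ) 1) :=
    (isPreconnected_Icc (a := (0 : ℝ)) (b := 1)).image γ hcont
  refine himg.subset_connectedComponentIn ⟨1, ⟨by norm_num, le_refl (1 : ℝ)⟩, h1⟩ ?_
    ⟨0, ⟨le_refl (0 : ℝ), by norm_num⟩, h0⟩
  rintro y ⟨t, ht, rfl⟩
  exact ne_of_gt (hposγ t ht)
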